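/- For the generic monic polynomial f of degree n ≥ 3 over ℚ[a_0, …, a_{n-1}], the determinant polynomial H, regarded as a polynomial in x with coefficients in ℚ[a_0, …, a_{n-1}], has degree in x exactly (n−1)(n−2)/2. -/

import Mathlib

/-- The resultant of two univariate polynomials `p, q` over a commutative ring,
defined as the determinant of the Sylvester matrix of `p` and `q` built from their
(actual) degrees: it has `q.natDegree` shifted rows of coefficients of `p` followed by
`p.natDegree` shifted rows of coefficients of `q`. -/
noncomputable def sylResultant {R : Type} [CommRing R] (p q : Polynomial R) : R :=
  Matrix.det (Matrix.of fun i j : Fin (p.natDegree + q.natDegree) =>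
    if (i : ℕ) < q.natDegree then
      (if (i : ℕ) ≤ (j : ℕ) ∧ (j : ℕ) ≤ (i : ℕ) + p.natDegree
        then p.coeff ((i : ℕ) + p.natDegree - (j : ℕ)) else 0)
    else
      (if (i : ℕ) - q.natDegree ≤ (j : ℕ) ∧ (j : ℕ) ≤ ((i : ℕ) - q.natDegree) + q.natDegree
        then q.coeff (((i : ℕ) - q.natDegree) + q.natDegree - (j : ℕ)) else 0))

/-- The determinant polynomial `H` associated with `f` of degree `n`: the determinant of
the `(n-2) × (n-2)` matrix whose entry in (1-indexed) row `p`, column `q` is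
`f⁽²ᑫ⁻ᵖ⁺¹⁾/(2q-p+1)!` (a Hasse derivative of `f`) when `2q - p + 1 ≥ 1`, and `0`
when `2q - p + 1 ≤ 0`. (Below `p q : Fin (n-2)` are 0-indexed, so the derivative
order is `2q - p + 2`.) -/
noncomputable def Hdet {R : Type} [CommRing R] (n : ℕ) (f : Polynomial R) : Polynomial R :=
  Matrix.det (Matrix.of fun p q : Fin (n - 2) =>
    if (p : ℕ) ≤ 2 * (q : ℕ) + 1 then Polynomial.hasseDeriv (2 * (q : ℕ) + 2 - (p : ℕ)) f
    else 0)

open Polynomial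

lemma aux_coeff_prod_sum {R : Type*} [CommSemiring R] {ι : Type*}
    (s : Finset ι) (f : ι → R[X]) (d : ι → ℕ)
    (h : ∀ i ∈ s, (f i).natDegree ≤ d i) :
    (∏ i ∈ s, f i).coeff (∑ i ∈ s, d i) = ∏ i ∈ s, (f i).coeff (d i) := by
  induction s using Finset.cons_induction with
  | empty => simp
  | cons a s ha ih =>
    rw [Finset.prod_cons, Finset.sum_cons, Finset.prod_cons,
      Polynomial.coeff_mul_add_eq_of_natDegree_le (h a (Finset.mem_cons_self a s))
        (le_trans (Polynomial.natDegree_prod_le s f)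
          (Finset.sum_le_sum fun i hi => h i (Finset.mem_cons_of_mem hi))),
      ih (fun i hi => h i (Finset.mem_cons_of_mem hi))]

lemma aux_hasseDeriv_eq_zero {R : Type*} [Semiring R] (f : R[X]) (k : ℕ)
    (h : f.natDegree < k) : Polynomial.hasseDeriv k f = 0 := by
  ext m
  rw [Polynomial.hasseDeriv_coeff, Polynomial.coeff_eq_zero_of_natDegree_lt (by omega),
    mul_zero, Polynomial.coeff_zero]

lemma aux_sum_comp {R : Type*} [CommSemiring R] {ι : Type*}
    (s : Finset ι) (f : ι → R[X]) (r : R[X]) :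
    (∑ i ∈ s, f i).comp r = ∑ i ∈ s, (f i).comp r := by
  induction s using Finset.cons_induction with
  | empty => simp
  | cons a s ha ih => rw [Finset.sum_cons, Finset.sum_cons, Polynomial.add_comp, ih]

lemma aux_comp_neg_neg {R : Type*} [CommRing R] (p : R[X]) :
    (p.comp (-X)).comp (-X) = p := by
  rw [Polynomial.comp_assoc]
  simp [Polynomial.neg_comp, Polynomial.X_comp]

lemma aux_natDegree_comp_neg_le {R : Type*} [CommRing R] [Nontrivial R] (p : R[X]) :
    (p.comp (-X)).natDegree ≤ p.natDegree := by
  refine (Polynomial.natDegree_comp_le).trans ?_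
  rw [Polynomial.natDegree_neg, Polynomial.natDegree_X, mul_one]

lemma aux_coprime (n : ℕ) (hn : 1 ≤ n) :
    IsCoprime ((X + 1) ^ n - X ^ n : ℚ[X]) (((X + 1) ^ n - X ^ n : ℚ[X]).comp (-X)) := by
  set g : ℚ[X] := (X + 1) ^ n - X ^ n with hg
  rw [← Polynomial.isCoprime_map (algebraMap ℚ ℂ)]
  by_contra hcop
  set p := g.map (algebraMap ℚ ℂ) with hp
  set q := (g.comp (-X)).map (algebraMap ℚ ℂ) with hq
  have hpC : p = ((X + 1) ^ n - X ^ n : ℂ[X]) := by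
    rw [hp, hg]
    simp [Polynomial.map_sub, Polynomial.map_pow, Polynomial.map_add]
  have hqC : q = p.comp (-X) := by
    rw [hq, Polynomial.map_comp, hp]
    simp
  have hd : ¬ IsUnit (EuclideanDomain.gcd p q) := by
    rw [EuclideanDomain.gcd_isUnit_iff]; exact hcop
  have hdeg : (EuclideanDomain.gcd p q).degree ≠ 0 := fun h =>
    hd (Polynomial.isUnit_iff_degree_eq_zero.2 h)
  obtain ⟨z, hz⟩ := IsAlgClosed.exists_root _ hdeg
  have hz1 : p.IsRoot z := hz.dvd (EuclideanDomain.gcd_dvd_left p q)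
  have hz2 : q.IsRoot z := hz.dvd (EuclideanDomain.gcd_dvd_right p q)
  rw [hpC] at hz1
  rw [hqC, Polynomial.IsRoot, Polynomial.eval_comp, hpC] at hz2
  simp only [Polynomial.IsRoot, Polynomial.eval_sub, Polynomial.eval_pow,
    Polynomial.eval_add, Polynomial.eval_one, Polynomial.eval_X, Polynomial.eval_neg,
    sub_eq_zero] at hz1 hz2
  -- hz1 : (z+1)^n = z^n, hz2 : (-z+1)^n = (-z)^n
  have h1 : ‖z + 1‖ = ‖z‖ := by
    have := congrArg (fun w : ℂ => ‖w‖) hz1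
    simp only [norm_pow] at this
    exact (pow_left_inj₀ (norm_nonneg _) (norm_nonneg _) (by omega)).1 this
  have h2 : ‖-z + 1‖ = ‖z‖ := by
    have := congrArg (fun w : ℂ => ‖w‖) hz2
    simp only [norm_pow, norm_neg] at this
    exact (pow_left_inj₀ (norm_nonneg _) (norm_nonneg _) (by omega)).1 this
  have e1 := congrArg (fun t : ℝ => t ^ 2) h1
  have e2 := congrArg (fun t : ℝ => t ^ 2) h2
  simp only [Complex.sq_norm, Complex.normSq_apply, Complex.add_re, Complex.add_im,
    Complex.one_re, Complex.one_im, Complex.neg_re, Complex.neg_im] at e1 e2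
  nlinarith [e1, e2]

lemma aux_detL_ne_zero (m : ℕ) :
    (Matrix.of fun p q : Fin (m + 1) =>
      if (p : ℕ) ≤ 2 * (q : ℕ) + 1 then (((m + 3).choose (2 * (q : ℕ) + 2 - (p : ℕ))) : ℚ)
      else 0).det ≠ 0 := by
  intro hdet
  obtain ⟨v, hv0, hv⟩ := (Matrix.exists_mulVec_eq_zero_iff).2 hdet
  set g : ℚ[X] := (X + 1) ^ (m + 3) - X ^ (m + 3) with hg
  have hgc : ∀ k, g.coeff k = if k = m + 3 then 0 else ((m + 3).choose k : ℚ) := by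
    intro k
    rw [hg, Polynomial.coeff_sub, Polynomial.coeff_X_add_one_pow, Polynomial.coeff_X_pow]
    by_cases h : k = m + 3
    · subst h; simp [Nat.choose_self]
    · simp [h]
  have hg0 : ∀ k, m + 3 ≤ k → g.coeff k = 0 := by
    intro k hk
    rw [hgc]
    by_cases h : k = m + 3
    · simp [h]
    · rw [if_neg h, Nat.choose_eq_zero_of_lt (by omega), Nat.cast_zero]
  have hgne : g ≠ 0 := by
    intro h
    have h0 := hgc 0
    rw [h] at h0
    simp at h0
  have hgdeg : g.natDegree ≤ m + 2 :=
    Polynomial.natDegree_le_iff_coeff_eq_zero.2 fun k hk => hg0 k (by omega)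
  set c2 : ℚ[X] := ∑ q : Fin (m + 1), C (v q) * X ^ (2 * (q : ℕ)) with hc2
  have hc2c : ∀ q : Fin (m + 1), c2.coeff (2 * (q : ℕ)) = v q := by
    intro q
    rw [hc2, Polynomial.finset_sum_coeff, Finset.sum_eq_single q]
    · simp
    · intro b _ hb
      rw [Polynomial.coeff_C_mul, Polynomial.coeff_X_pow, if_neg, mul_zero]
      intro h
      exact hb (Fin.ext (by omega))
    · simp
  have hc2ne : c2 ≠ 0 := by
    obtain ⟨q, hq⟩ := Function.ne_iff.1 hv0
    exact fun h => hq (by rw [← hc2c q, h, Polynomial.coeff_zero]; rfl)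
  have hc2deg : c2.natDegree ≤ 2 * m := by
    rw [hc2]
    refine Polynomial.natDegree_sum_le_of_forall_le _ _ fun q _ => ?_
    refine (Polynomial.natDegree_C_mul_le _ _).trans ?_
    rw [Polynomial.natDegree_X_pow]
    have := q.is_lt
    omega
  have hLg : ∀ p q : ℕ, p ≤ m → q ≤ m →
      (if p ≤ 2 * q + 1 then (((m + 3).choose (2 * q + 2 - p)) : ℚ) else 0)
      = (if 2 * q ≤ m + 1 + p then g.coeff (m + 1 + p - 2 * q) else 0) := by
    intro p q hp hq
    by_cases h1 : 2 * q ≤ m + 1 + p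
    · rw [if_pos h1]
      by_cases h2 : p ≤ 2 * q + 1
      · rw [if_pos h2, hgc, if_neg (by omega)]
        have he : m + 1 + p - 2 * q = (m + 3) - (2 * q + 2 - p) := by omega
        rw [he, Nat.choose_symm (by omega)]
      · rw [if_neg h2, hg0 _ (by omega)]
    · rw [if_neg h1, if_pos (by omega), Nat.choose_eq_zero_of_lt (by omega), Nat.cast_zero]
  have hwin : ∀ j, j < m + 1 → (g * c2).coeff (m + 1 + j) = 0 := by
    intro j hj
    have hrow := congrFun hv ⟨j, hj⟩
    rw [Matrix.mulVec, dotProduct] at hrow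
    simp only [Pi.zero_apply] at hrow
    have hexp : g * c2 = ∑ q : Fin (m + 1), C (v q) * (g * X ^ (2 * (q : ℕ))) := by
      rw [hc2, Finset.mul_sum]
      exact Finset.sum_congr rfl fun q _ => by ring
    rw [hexp, Polynomial.finset_sum_coeff, ← hrow]
    refine Finset.sum_congr rfl fun q _ => ?_
    rw [Polynomial.coeff_C_mul, Polynomial.coeff_mul_X_pow', Matrix.of_apply]
    simp only [Fin.val_mk]
    rw [hLg j (q : ℕ) (by omega) (by omega)]
    ring
  set A : ℚ[X] := (g * c2) %ₘ (X ^ (m + 1)) with hA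
  set Q : ℚ[X] := (g * c2) /ₘ (X ^ (m + 1)) with hQ
  have hMon : (X ^ (m + 1) : ℚ[X]).Monic := Polynomial.monic_X_pow _
  have hsplit0 : A + X ^ (m + 1) * Q = g * c2 := Polynomial.modByMonic_add_div _ _
  have hAdegree : A.degree < ((m + 1 : ℕ) : WithBot ℕ) := by
    have h := Polynomial.degree_modByMonic_lt (g * c2) hMon
    rwa [Polynomial.degree_X_pow] at h
  have hAdeg : A.natDegree ≤ m := by
    by_cases hA0 : A = 0
    · simp [hA0]
    · have := (Polynomial.natDegree_lt_iff_degree_lt hA0).2 hAdegree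
      omega
  have hQc : ∀ j, j < m + 1 → Q.coeff j = 0 := by
    intro j hj
    have h1 : (A + X ^ (m + 1) * Q).coeff (j + (m + 1)) = 0 := by
      rw [hsplit0, show j + (m + 1) = m + 1 + j from by omega]
      exact hwin j hj
    rw [Polynomial.coeff_add, Polynomial.coeff_X_pow_mul,
      Polynomial.coeff_eq_zero_of_degree_lt
        (lt_of_lt_of_le hAdegree (Nat.cast_le.2 (Nat.le_add_left (m + 1) j))),
      zero_add] at h1
    exact h1
  obtain ⟨B, hB⟩ := (Polynomial.X_pow_dvd_iff).2 hQc
  have hsplit : g * c2 = A + X ^ (2 * (m + 1)) * B := by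
    rw [← hsplit0, hB]; ring
  have hgc2deg : (g * c2).natDegree ≤ 3 * m + 2 :=
    (Polynomial.natDegree_mul_le).trans (le_trans (add_le_add hgdeg hc2deg) (by omega))
  have hBdeg : B.natDegree ≤ m := by
    by_cases hB0 : B = 0
    · simp [hB0]
    · have h1 : (X ^ (2 * (m + 1)) * B).natDegree = 2 * (m + 1) + B.natDegree := by
        rw [Polynomial.natDegree_mul (pow_ne_zero _ Polynomial.X_ne_zero) hB0,
          Polynomial.natDegree_X_pow]
      have h2 : (X ^ (2 * (m + 1)) * B) = g * c2 - A := by rw [hsplit]; ring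
      have h3 : (g * c2 - A).natDegree ≤ 3 * m + 2 :=
        (Polynomial.natDegree_sub_le _ _).trans (max_le hgc2deg (hAdeg.trans (by omega)))
      have h4 : 2 * (m + 1) + B.natDegree ≤ 3 * m + 2 := by rw [← h1, h2]; exact h3
      omega
  have hc2N : c2.comp (-X) = c2 := by
    rw [hc2, aux_sum_comp]
    refine Finset.sum_congr rfl fun q _ => ?_
    rw [Polynomial.mul_comp, Polynomial.C_comp, Polynomial.X_pow_comp,
      (even_two_mul _).neg_pow]
  have hsplitN : g.comp (-X) * c2 = A.comp (-X) + X ^ (2 * (m + 1)) * B.comp (-X) := by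
    have hcc := congrArg (fun p : ℚ[X] => p.comp (-X)) hsplit
    simp only [Polynomial.mul_comp, Polynomial.add_comp, Polynomial.X_pow_comp,
      hc2N] at hcc
    rw [(even_two_mul _).neg_pow] at hcc
    exact hcc
  set w : ℚ[X] := g * B.comp (-X) - g.comp (-X) * B with hw
  have hkey : g.comp (-X) * A - g * A.comp (-X) = X ^ (2 * (m + 1)) * w := by
    rw [hw]
    linear_combination g * hsplitN - g.comp (-X) * hsplit
  have hw0 : w = 0 := by
    by_contra hwne
    have hdeg1 : (g.comp (-X) * A - g * A.comp (-X)).natDegree ≤ 2 * (m + 1) := by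
      refine (Polynomial.natDegree_sub_le _ _).trans (max_le ?_ ?_)
      · exact (Polynomial.natDegree_mul_le).trans
          ((add_le_add ((aux_natDegree_comp_neg_le g).trans hgdeg) hAdeg).trans (by omega))
      · exact (Polynomial.natDegree_mul_le).trans
          ((add_le_add hgdeg ((aux_natDegree_comp_neg_le A).trans hAdeg)).trans (by omega))
    rw [hkey, Polynomial.natDegree_mul (pow_ne_zero _ Polynomial.X_ne_zero) hwne,
      Polynomial.natDegree_X_pow] at hdeg1
    have hwdeg : w.natDegree = 0 := by omega
    have ha : w = C (w.coeff 0) := Polynomial.eq_C_of_natDegree_eq_zero hwdeg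
    have hodd : w.comp (-X) = -w := by
      rw [hw, Polynomial.sub_comp, Polynomial.mul_comp, Polynomial.mul_comp,
        aux_comp_neg_neg, aux_comp_neg_neg]
      ring
    rw [ha, Polynomial.C_comp] at hodd
    have h2 : w.coeff 0 = -(w.coeff 0) := by
      have := congrArg (fun p : ℚ[X] => p.coeff 0) hodd
      simpa using this
    apply hwne
    rw [ha, show w.coeff 0 = 0 by linarith, Polynomial.C_0]
  have hBN : g * B.comp (-X) = g.comp (-X) * B := by
    have h := hw0
    rw [hw, sub_eq_zero] at h
    exact h
  have hAN : g.comp (-X) * A = g * A.comp (-X) := by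
    have h := hkey
    rw [hw0, mul_zero, sub_eq_zero] at h
    exact h
  have hcop : IsCoprime g (g.comp (-X)) := aux_coprime (m + 3) (by omega)
  have hgdegge : m + 2 ≤ g.natDegree := by
    refine Polynomial.le_natDegree_of_ne_zero ?_
    rw [hgc, if_neg (by omega)]
    have hcs : (m + 3).choose (m + 2) = m + 3 := by
      rw [← Nat.choose_symm (show m + 2 ≤ m + 3 by omega)]
      norm_num
    rw [hcs]
    exact Nat.cast_ne_zero.2 (by omega)
  have hA0 : A = 0 := by
    by_contra hA0
    have h1 := Polynomial.natDegree_le_of_dvd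
      (hcop.dvd_of_dvd_mul_left ⟨A.comp (-X), hAN⟩) hA0
    omega
  have hB0 : B = 0 := by
    by_contra hB0
    have h1 := Polynomial.natDegree_le_of_dvd
      (hcop.dvd_of_dvd_mul_left ⟨B.comp (-X), hBN.symm⟩) hB0
    omega
  have hzero : g * c2 = 0 := by rw [hsplit, hA0, hB0]; ring
  rcases mul_eq_zero.1 hzero with h | h
  · exact hgne h
  · exact hc2ne h

lemma aux_gauss (m : ℕ) : 2 * (∑ i : Fin (m + 1), (i : ℕ)) = (m + 1) * m := by
  rw [Fin.sum_univ_eq_sum_range (fun i => i) (m + 1), mul_comm]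
  exact Finset.sum_range_id_mul_two (m + 1)

/-- For the generic monic polynomial
`f = xⁿ + a_{n-1} xⁿ⁻¹ + ⋯ + a₁ x + a₀` of degree `n ≥ 3` over `ℚ[a₀, …, a_{n-1}]`,
the determinant polynomial `H` has degree exactly `(n-1)(n-2)/2` in `x`. -/
theorem Hdet_natDegree
    (n : ℕ) (hn : 3 ≤ n)
    (f : Polynomial (MvPolynomial (Fin n) ℚ))
    (hf : f = Polynomial.X ^ n +
      ∑ i : Fin n, Polynomial.C (MvPolynomial.X i) * Polynomial.X ^ (i : ℕ)) :
    (Hdet n f).natDegree = (n - 1) * (n - 2) / 2 := by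
  obtain ⟨m, rfl⟩ : ∃ m, n = m + 3 := ⟨n - 3, by omega⟩
  clear hn
  set R := MvPolynomial (Fin (m + 3)) ℚ with hR
  have hfc : ∀ k, m + 3 ≤ k → f.coeff k = if k = m + 3 then 1 else 0 := by
    intro k hk
    rw [hf, Polynomial.coeff_add, Polynomial.coeff_X_pow, Polynomial.finset_sum_coeff]
    have hz : ∑ i : Fin (m + 3),
        (Polynomial.C (MvPolynomial.X i) * X ^ (i : ℕ) : Polynomial R).coeff k = 0 := by
      refine Finset.sum_eq_zero fun i _ => ?_
      rw [Polynomial.coeff_C_mul, Polynomial.coeff_X_pow, if_neg (by have := i.is_lt; omega),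
        mul_zero]
    rw [hz, add_zero]
  have hfn : f.coeff (m + 3) = 1 := by rw [hfc (m + 3) le_rfl, if_pos rfl]
  have hfdeg : f.natDegree = m + 3 :=
    le_antisymm
      (Polynomial.natDegree_le_iff_coeff_eq_zero.2 fun k hk => by
        rw [hfc k (by omega), if_neg (by omega)])
      (Polynomial.le_natDegree_of_ne_zero (by rw [hfn]; exact one_ne_zero))
  set M : Matrix (Fin (m + 1)) (Fin (m + 1)) (Polynomial R) :=
    Matrix.of (fun p q : Fin (m + 1) =>
      if (p : ℕ) ≤ 2 * (q : ℕ) + 1 then Polynomial.hasseDeriv (2 * (q : ℕ) + 2 - (p : ℕ)) f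
      else 0) with hM
  set Mc : Matrix (Fin (m + 1)) (Fin (m + 1)) R :=
    Matrix.of (fun p q : Fin (m + 1) =>
      if (p : ℕ) ≤ 2 * (q : ℕ) + 1 then (((m + 3).choose (2 * (q : ℕ) + 2 - (p : ℕ))) : R)
      else 0) with hMc
  have hMzero : ∀ p q : Fin (m + 1),
      ¬((p : ℕ) ≤ 2 * (q : ℕ) + 1 ∧ 2 * (q : ℕ) + 2 ≤ m + 3 + (p : ℕ)) →
      M p q = 0 ∧ Mc p q = 0 := by
    intro p q h
    rw [hM, hMc]
    rw [Matrix.of_apply, Matrix.of_apply]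
    by_cases h1 : (p : ℕ) ≤ 2 * (q : ℕ) + 1
    · constructor
      · rw [if_pos h1]
        exact aux_hasseDeriv_eq_zero f _ (by rw [hfdeg]; omega)
      · rw [if_pos h1, Nat.choose_eq_zero_of_lt (by omega), Nat.cast_zero]
    · exact ⟨if_neg h1, if_neg h1⟩
  have hMdeg : ∀ p q : Fin (m + 1), (p : ℕ) ≤ 2 * (q : ℕ) + 1 →
      2 * (q : ℕ) + 2 ≤ m + 3 + (p : ℕ) →
      (M p q).natDegree ≤ m + 3 + (p : ℕ) - (2 * (q : ℕ) + 2) := by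
    intro p q h1 h2
    rw [hM, Matrix.of_apply, if_pos h1]
    refine (Polynomial.natDegree_hasseDeriv_le f _).trans ?_
    rw [hfdeg]
    omega
  have hMcoe : ∀ p q : Fin (m + 1), (p : ℕ) ≤ 2 * (q : ℕ) + 1 →
      2 * (q : ℕ) + 2 ≤ m + 3 + (p : ℕ) →
      (M p q).coeff (m + 3 + (p : ℕ) - (2 * (q : ℕ) + 2)) = Mc p q := by
    intro p q h1 h2
    rw [hM, hMc, Matrix.of_apply, Matrix.of_apply, if_pos h1, if_pos h1,
      Polynomial.hasseDeriv_coeff,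
      show m + 3 + (p : ℕ) - (2 * (q : ℕ) + 2) + (2 * (q : ℕ) + 2 - (p : ℕ)) = m + 3 from by
        omega,
      hfn, mul_one]
  have hsumd : ∀ σ : Equiv.Perm (Fin (m + 1)),
      (∀ i : Fin (m + 1), (σ i : ℕ) ≤ 2 * (i : ℕ) + 1 ∧ 2 * (i : ℕ) + 2 ≤ m + 3 + (σ i : ℕ)) →
      ∑ i : Fin (m + 1), (m + 3 + (σ i : ℕ) - (2 * (i : ℕ) + 2)) = (m + 2) * (m + 1) / 2 := by
    intro σ hgood
    have h2 : (∑ i : Fin (m + 1), (m + 3 + (σ i : ℕ) - (2 * (i : ℕ) + 2)))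
        + ∑ i : Fin (m + 1), (2 * (i : ℕ) + 2) = ∑ i : Fin (m + 1), (m + 3 + (σ i : ℕ)) := by
      rw [← Finset.sum_add_distrib]
      exact Finset.sum_congr rfl fun i _ => by have := (hgood i).2; omega
    have h3 : ∑ i : Fin (m + 1), (2 * (i : ℕ) + 2)
        = 2 * (∑ i : Fin (m + 1), (i : ℕ)) + 2 * (m + 1) := by
      rw [Finset.sum_add_distrib, ← Finset.mul_sum]
      simp [Finset.sum_const, Finset.card_univ, mul_comm]
    have h4 : ∑ i : Fin (m + 1), (m + 3 + (σ i : ℕ))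
        = (m + 3) * (m + 1) + ∑ i : Fin (m + 1), (i : ℕ) := by
      rw [Finset.sum_add_distrib, Equiv.sum_comp σ (fun j : Fin (m + 1) => (j : ℕ))]
      simp [Finset.sum_const, Finset.card_univ, mul_comm]
    rw [h3, h4] at h2
    have hG := aux_gauss m
    have h5 : (∑ i : Fin (m + 1), (m + 3 + (σ i : ℕ) - (2 * (i : ℕ) + 2))) * 2
        = (m + 2) * (m + 1) := by
      zify at h2 hG ⊢
      linear_combination 2 * h2 - hG
    exact (Nat.div_eq_of_eq_mul_left (by norm_num) h5.symm).symm
  have hcoeff : ∀ σ : Equiv.Perm (Fin (m + 1)),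
      (∏ i, M (σ i) i).coeff ((m + 2) * (m + 1) / 2) = ∏ i, Mc (σ i) i := by
    intro σ
    by_cases hgood : ∀ i : Fin (m + 1),
        (σ i : ℕ) ≤ 2 * (i : ℕ) + 1 ∧ 2 * (i : ℕ) + 2 ≤ m + 3 + (σ i : ℕ)
    · rw [← hsumd σ hgood,
        aux_coeff_prod_sum Finset.univ (fun i => M (σ i) i)
          (fun i => m + 3 + (σ i : ℕ) - (2 * (i : ℕ) + 2))
          (fun i _ => hMdeg (σ i) i (hgood i).1 (hgood i).2)]
      exact Finset.prod_congr rfl fun i _ => hMcoe (σ i) i (hgood i).1 (hgood i).2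
    · obtain ⟨i, hi⟩ := not_forall.1 hgood
      have hz := hMzero (σ i) i hi
      rw [show (∏ i, M (σ i) i) = 0 from Finset.prod_eq_zero (Finset.mem_univ i) hz.1,
        show (∏ i, Mc (σ i) i) = 0 from Finset.prod_eq_zero (Finset.mem_univ i) hz.2,
        Polynomial.coeff_zero]
  have hdegle : ∀ σ : Equiv.Perm (Fin (m + 1)),
      (∏ i, M (σ i) i).natDegree ≤ (m + 2) * (m + 1) / 2 := by
    intro σ
    by_cases hgood : ∀ i : Fin (m + 1),
        (σ i : ℕ) ≤ 2 * (i : ℕ) + 1 ∧ 2 * (i : ℕ) + 2 ≤ m + 3 + (σ i : ℕ)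
    · refine (Polynomial.natDegree_prod_le _ _).trans ?_
      rw [← hsumd σ hgood]
      exact Finset.sum_le_sum fun i _ => hMdeg (σ i) i (hgood i).1 (hgood i).2
    · obtain ⟨i, hi⟩ := not_forall.1 hgood
      rw [show (∏ i, M (σ i) i) = 0 from Finset.prod_eq_zero (Finset.mem_univ i)
        (hMzero (σ i) i hi).1]
      simp
  have hdetcoeff : (Matrix.det M).coeff ((m + 2) * (m + 1) / 2) = Matrix.det Mc := by
    rw [Matrix.det_apply', Matrix.det_apply', Polynomial.finset_sum_coeff]
    refine Finset.sum_congr rfl fun σ _ => ?_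
    rw [← Polynomial.C_eq_intCast, Polynomial.coeff_C_mul, hcoeff σ]
  have hdetle : (Matrix.det M).natDegree ≤ (m + 2) * (m + 1) / 2 := by
    rw [Matrix.det_apply']
    refine Polynomial.natDegree_sum_le_of_forall_le _ _ fun σ _ => ?_
    rw [← Polynomial.C_eq_intCast]
    exact (Polynomial.natDegree_C_mul_le _ _).trans (hdegle σ)
  have hmap : Mc = (Matrix.of fun p q : Fin (m + 1) =>
      if (p : ℕ) ≤ 2 * (q : ℕ) + 1 then (((m + 3).choose (2 * (q : ℕ) + 2 - (p : ℕ))) : ℚ)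
      else 0).map (algebraMap ℚ R) := by
    rw [hMc]
    ext p q
    simp only [Matrix.map_apply, Matrix.of_apply]
    rw [apply_ite (algebraMap ℚ R), map_natCast, map_zero]
  have hdetne : Matrix.det Mc ≠ 0 := by
    rw [hmap, ← RingHom.mapMatrix_apply, ← RingHom.map_det]
    intro h
    apply aux_detL_ne_zero m
    apply (algebraMap ℚ R).injective
    rw [h, map_zero]
  have hfinal : (Matrix.det M).natDegree = (m + 2) * (m + 1) / 2 :=
    le_antisymm hdetle
      (Polynomial.le_natDegree_of_ne_zero (by rw [hdetcoeff]; exact hdetne))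
  rw [show m + 3 - 1 = m + 2 from by omega, show m + 3 - 2 = m + 1 from by omega]
  have hHdet : Hdet (m + 3) f = Matrix.det M := rfl
  rw [hHdet]
  exact hfinal
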